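/- Let n be a power of 2 and let f, g ∈ R[x] be polynomials of degree strictly less than n over a commutative ring R. Then f·g = Σ_{k=0}^{n−1} σ_k · S_{n−1−k} · ( (S_{n−1−k}·x^k) ⊙ (S_k·f̄) ⊙ (S_k·ḡ) ), where f̄ = σ ⊙ f and ḡ = σ ⊙ g. -/

import Mathlib

/-- The signed Thue–Morse sequence: `σ n = (-1)^(Hamming weight of n)`. -/
noncomputable def sgn (R : Type*) [CommRing R] (n : ℕ) : R := (-1) ^ (Nat.digits 2 n).sum

/-- The Sierpiński polynomial `S m = ∏_{j≥0} (1 + X^(2^j))^(d_j m)` where `d_j m` is the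
`j`-th binary digit of `m`. -/
noncomputable def Sier (R : Type*) [CommRing R] (m : ℕ) : Polynomial R :=
  ∏ j ∈ Finset.range (m + 1), if m.testBit j then 1 + Polynomial.X ^ (2 ^ j) else 1

/-- Termwise (Hadamard) product of polynomials. -/
noncomputable def hadP {R : Type*} [CommRing R] (p q : Polynomial R) : Polynomial R :=
  ∑ n ∈ p.support, Polynomial.C (p.coeff n * q.coeff n) * Polynomial.X ^ n

/-- `σ ⊙ p`: termwise product of a polynomial with the signed Thue–Morse sequence. -/
noncomputable def barP {R : Type*} [CommRing R] (p : Polynomial R) : Polynomial R :=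
  ∑ n ∈ p.support, Polynomial.C (sgn R n * p.coeff n) * Polynomial.X ^ n

/-! ### Auxiliary: bitwise lemmas -/

section Bits
open Nat

lemma aux_testBit_bit_zero (x u : ℕ) (hu : u < 2) : (2*x+u).testBit 0 = decide (u = 1) := by
  simp only [Nat.testBit_zero, decide_eq_decide]; omega

lemma aux_testBit_bit_succ (x u i : ℕ) (hu : u < 2) : (2*x+u).testBit (i+1) = x.testBit i := by
  rw [Nat.testBit_add_one]; congr 1; omega

lemma aux_lor_bit (x y u v : ℕ) (hu : u < 2) (hv : v < 2) :
    (2*x+u) ||| (2*y+v) = 2*(x ||| y) + (u ||| v) := by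
  have huv : (u ||| v) < 2 := by interval_cases u <;> interval_cases v <;> decide
  apply Nat.eq_of_testBit_eq
  intro i
  cases i with
  | zero =>
    rw [Nat.testBit_or, aux_testBit_bit_zero _ _ hu, aux_testBit_bit_zero _ _ hv,
      aux_testBit_bit_zero _ _ huv]
    interval_cases u <;> interval_cases v <;> decide
  | succ i =>
    rw [Nat.testBit_or, aux_testBit_bit_succ _ _ _ hu, aux_testBit_bit_succ _ _ _ hv,
      aux_testBit_bit_succ _ _ _ huv, Nat.testBit_or]

lemma aux_land_bit (x y u v : ℕ) (hu : u < 2) (hv : v < 2) :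
    (2*x+u) &&& (2*y+v) = 2*(x &&& y) + (u &&& v) := by
  have huv : (u &&& v) < 2 := by interval_cases u <;> interval_cases v <;> decide
  apply Nat.eq_of_testBit_eq
  intro i
  cases i with
  | zero =>
    rw [Nat.testBit_and, aux_testBit_bit_zero _ _ hu, aux_testBit_bit_zero _ _ hv,
      aux_testBit_bit_zero _ _ huv]
    interval_cases u <;> interval_cases v <;> decide
  | succ i =>
    rw [Nat.testBit_and, aux_testBit_bit_succ _ _ _ hu, aux_testBit_bit_succ _ _ _ hv,
      aux_testBit_bit_succ _ _ _ huv, Nat.testBit_and]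

lemma aux_add_of_and_eq_zero : ∀ a b : ℕ, a &&& b = 0 → a + b = a ||| b := by
  intro a
  induction a using Nat.strong_induction_on with
  | _ a ih =>
    intro b h
    rcases Nat.eq_zero_or_pos a with rfl | ha
    · simp
    rcases Nat.eq_zero_or_pos b with rfl | hb
    · simp
    have ha2 : a = 2*(a/2) + a%2 := by omega
    have hb2 : b = 2*(b/2) + b%2 := by omega
    rw [ha2, hb2] at h ⊢
    rw [aux_land_bit _ _ _ _ (Nat.mod_lt _ (by norm_num)) (Nat.mod_lt _ (by norm_num))] at h
    have h1 : a/2 &&& b/2 = 0 := by omega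
    have h2 : a%2 &&& b%2 = 0 := by omega
    rw [aux_lor_bit _ _ _ _ (Nat.mod_lt _ (by norm_num)) (Nat.mod_lt _ (by norm_num))]
    have hih := ih (a/2) (by omega) (b/2) h1
    have h3 : a%2 ||| b%2 = a%2 + b%2 := by
      have e1 : a%2 < 2 := Nat.mod_lt _ (by norm_num)
      have e2 : b%2 < 2 := Nat.mod_lt _ (by norm_num)
      interval_cases _h : a%2 <;> interval_cases _h2 : b%2 <;> revert h2 <;> decide
    omega

lemma aux_sub_iff (a b : ℕ) : a &&& b = a ↔ ∀ i, a.testBit i = true → b.testBit i = true := by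
  constructor
  · intro h i hi
    have := congrArg (fun x => x.testBit i) h
    simp only [Nat.testBit_and, hi, Bool.true_and] at this
    exact this
  · intro h
    apply Nat.eq_of_testBit_eq
    intro i
    rw [Nat.testBit_and]
    cases ha : a.testBit i
    · simp
    · simp [h i ha]

lemma aux_sub_le {a b : ℕ} (h : a &&& b = a) : a ≤ b := h ▸ Nat.and_le_right

lemma aux_sub_trans {a b c : ℕ} (h1 : a &&& b = a) (h2 : b &&& c = b) : a &&& c = a := by
  rw [aux_sub_iff] at *
  exact fun i hi => h2 i (h1 i hi)

lemma aux_sub_antisymm {a b : ℕ} (h1 : a &&& b = a) (h2 : b &&& a = b) : a = b :=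
  le_antisymm (aux_sub_le h1) (aux_sub_le h2)

lemma aux_and_eq_zero_iff (a b : ℕ) :
    a &&& b = 0 ↔ ∀ i, a.testBit i = true → b.testBit i = false := by
  constructor
  · intro h i hi
    have := congrArg (fun x => x.testBit i) h
    simp only [Nat.testBit_and, hi, Bool.true_and, Nat.zero_testBit] at this
    exact this
  · intro h
    apply Nat.eq_of_testBit_eq
    intro i
    rw [Nat.testBit_and, Nat.zero_testBit]
    cases ha : a.testBit i
    · simp
    · simp [h i ha]

lemma aux_sub_add_xor {a b : ℕ} (h : a &&& b = a) : a + (b ^^^ a) = b := by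
  have hd : a &&& (b ^^^ a) = 0 := by
    rw [aux_and_eq_zero_iff]
    intro i hi
    rw [Nat.testBit_xor, (aux_sub_iff a b).1 h i hi, hi]
    rfl
  have ho : a ||| (b ^^^ a) = b := by
    apply Nat.eq_of_testBit_eq
    intro i
    rw [Nat.testBit_or, Nat.testBit_xor]
    cases ha : a.testBit i
    · simp
    · simp [(aux_sub_iff a b).1 h i ha]
  rw [aux_add_of_and_eq_zero _ _ hd, ho]

lemma aux_sub_sub_eq_xor {a b : ℕ} (h : a &&& b = a) : b - a = b ^^^ a := by
  have := aux_sub_add_xor h; omega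

lemma aux_testBit_true_lt {m i t : ℕ} (hm : m < 2^t) (h : m.testBit i = true) : i < t := by
  by_contra hc
  have h1 : 2^t ≤ 2^i := Nat.pow_le_pow_right (by norm_num) (by omega)
  have := Nat.ge_two_pow_of_testBit h
  omega

lemma aux_le_lor_left (a b : ℕ) : a &&& (a ||| b) = a := by
  rw [aux_sub_iff]; intro i hi; rw [Nat.testBit_or, hi]; rfl

lemma aux_le_lor_right (a b : ℕ) : b &&& (a ||| b) = b := by
  rw [aux_sub_iff]; intro i hi; rw [Nat.testBit_or, hi]; simp

lemma aux_bitsA {t k m : ℕ} (hk : k < 2^t) :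
    (k ≤ m ∧ (m-k) &&& (2^t-1-k) = m-k) ↔ (k &&& m = k ∧ m < 2^t) := by
  have hsubk : k &&& (2^t-1) = k := by
    rw [Nat.and_two_pow_sub_one_eq_mod, Nat.mod_eq_of_lt (by omega)]
  have hE : 2^t-1-k = (2^t-1) ^^^ k := aux_sub_sub_eq_xor hsubk
  constructor
  · rintro ⟨hkm, hr⟩
    set r := m - k with hrdef
    rw [hE] at hr
    have hrk : r &&& k = 0 := by
      rw [aux_and_eq_zero_iff]
      intro i hi
      have hbit := (aux_sub_iff _ _).1 hr i hi
      rw [Nat.testBit_xor] at hbit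
      have hit : i < t := by
        by_contra hc
        rw [Nat.testBit_two_pow_sub_one] at hbit
        have hkf : k.testBit i = false :=
          Nat.testBit_lt_two_pow (lt_of_lt_of_le hk (Nat.pow_le_pow_right (by norm_num) (by omega)))
        simp [hkf, show ¬ (i < t) from hc] at hbit
      rw [Nat.testBit_two_pow_sub_one] at hbit
      simpa [hit] using hbit
    have hrlt : r < 2^t := lt_of_le_of_lt (aux_sub_le hr) (Nat.xor_lt_two_pow (by omega) hk)
    have hkr : k &&& r = 0 := by
      rw [aux_and_eq_zero_iff] at hrk ⊢
      intro i hi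
      by_contra hc
      have := hrk i (by revert hc; cases r.testBit i <;> simp)
      simp [hi] at this
    have hm : m = k ||| r := by
      rw [← aux_add_of_and_eq_zero _ _ hkr]; omega
    constructor
    · rw [hm]; exact aux_le_lor_left k r
    · rw [hm]; exact Nat.or_lt_two_pow hk hrlt
  · rintro ⟨hkm, hmlt⟩
    refine ⟨aux_sub_le hkm, ?_⟩
    rw [aux_sub_sub_eq_xor hkm, hE, aux_sub_iff]
    intro i hi
    rw [Nat.testBit_xor] at hi ⊢
    rw [Nat.testBit_two_pow_sub_one]
    cases hki : k.testBit i
    · have hmi : m.testBit i = true := by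
        rw [hki] at hi; simpa using hi
      simp [aux_testBit_true_lt hmlt hmi]
    · have hmt : m.testBit i = true := (aux_sub_iff _ _).1 hkm i hki
      rw [hki, hmt] at hi
      simp at hi

lemma aux_bitsB {k m a : ℕ} (hkm : k &&& m = k) :
    (a ≤ m ∧ (m-a) &&& k = m-a) ↔ (a &&& m = a ∧ (m ^^^ a) &&& k = m ^^^ a) := by
  constructor
  · rintro ⟨ham, hj⟩
    set j := m - a with hjdef
    have hjm : j &&& m = j := aux_sub_trans hj hkm
    have haj : a = m ^^^ j := by
      have := aux_sub_add_xor hjm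
      omega
    have ham' : a &&& m = a := by
      rw [haj, aux_sub_iff]
      intro i hi
      rw [Nat.testBit_xor] at hi
      cases hmi : m.testBit i
      · rw [hmi] at hi
        have hj2 : j.testBit i = true := by simpa using hi
        have := (aux_sub_iff _ _).1 hjm i hj2
        simp [hmi] at this
      · rfl
    have hxa : m ^^^ a = j := by rw [haj]; rw [← Nat.xor_assoc, Nat.xor_self, Nat.zero_xor]
    exact ⟨ham', hxa ▸ hj⟩
  · rintro ⟨ham, hx⟩
    refine ⟨aux_sub_le ham, ?_⟩
    rw [aux_sub_sub_eq_xor ham]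
    exact hx

lemma aux_bitsC {k m a : ℕ} :
    (k &&& m = k ∧ a &&& m = a ∧ (m ^^^ a) &&& k = m ^^^ a) ↔ m = k ||| a := by
  constructor
  · rintro ⟨h1, h2, h3⟩
    apply aux_sub_antisymm
    · rw [aux_sub_iff]
      intro i hi
      rw [Nat.testBit_or]
      cases hai : a.testBit i
      · have hx : (m ^^^ a).testBit i = true := by rw [Nat.testBit_xor, hi, hai]; rfl
        simp [(aux_sub_iff _ _).1 h3 i hx]
      · simp
    · rw [aux_sub_iff]
      intro i hi
      rw [Nat.testBit_or] at hi
      rcases Bool.or_eq_true_iff.1 hi with h | h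
      · exact (aux_sub_iff _ _).1 h1 i h
      · exact (aux_sub_iff _ _).1 h2 i h
  · rintro rfl
    refine ⟨aux_le_lor_left _ _, aux_le_lor_right _ _, ?_⟩
    rw [aux_sub_iff]
    intro i hi
    rw [Nat.testBit_xor, Nat.testBit_or] at hi
    cases hki : k.testBit i
    · cases hai : a.testBit i <;> simp [hki, hai] at hi
    · rfl

lemma aux_bits2 {t k r : ℕ} (hk : k < 2^t) (hr : r < 2^t) :
    r &&& (2^t-1-k) = r ↔ r &&& k = 0 := by
  have hsubk : k &&& (2^t-1) = k := by
    rw [Nat.and_two_pow_sub_one_eq_mod, Nat.mod_eq_of_lt (by omega)]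
  have hE : 2^t-1-k = (2^t-1) ^^^ k := aux_sub_sub_eq_xor hsubk
  rw [hE]
  constructor
  · intro h
    rw [aux_and_eq_zero_iff]
    intro i hi
    have := (aux_sub_iff _ _).1 h i hi
    rw [Nat.testBit_xor, Nat.testBit_two_pow_sub_one] at this
    have hit : i < t := aux_testBit_true_lt hr hi
    simpa [hit] using this
  · intro h
    rw [aux_sub_iff]
    intro i hi
    rw [Nat.testBit_xor, Nat.testBit_two_pow_sub_one]
    have hit : i < t := aux_testBit_true_lt hr hi
    have := (aux_and_eq_zero_iff _ _).1 h i hi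
    simp [hit, this]

/-- combined support condition for the triple Hadamard product, monomial case -/
lemma aux_bigcond {t k a b m : ℕ} (hk : k < 2^t) (ha : a < 2^t) (hb : b < 2^t) :
    ((k ≤ m ∧ (m-k) &&& (2^t-1-k) = m-k) ∧ (a ≤ m ∧ (m-a) &&& k = m-a) ∧
      (b ≤ m ∧ (m-b) &&& k = m-b)) ↔ (k ||| a = k ||| b ∧ m = k ||| a) := by
  constructor
  · rintro ⟨h1, h2, h3⟩
    obtain ⟨hkm, hmlt⟩ := (aux_bitsA hk).1 h1
    have h2' := (aux_bitsB hkm).1 h2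
    have h3' := (aux_bitsB hkm).1 h3
    have hma : m = k ||| a := aux_bitsC.1 ⟨hkm, h2'⟩
    have hmb : m = k ||| b := aux_bitsC.1 ⟨hkm, h3'⟩
    exact ⟨by rw [← hma, ← hmb], hma⟩
  · rintro ⟨heq, rfl⟩
    have hmlt : k ||| a < 2^t := Nat.or_lt_two_pow hk ha
    have hkm : k &&& (k ||| a) = k := aux_le_lor_left k a
    refine ⟨(aux_bitsA hk).2 ⟨hkm, hmlt⟩, ?_, ?_⟩
    · exact (aux_bitsB hkm).2 (aux_bitsC.2 rfl).2
    · exact (aux_bitsB hkm).2 (aux_bitsC.2 heq).2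

end Bits

/-! ### Auxiliary: sgn lemmas -/

section Sgn
variable {R : Type*} [CommRing R]

lemma sgn_zero : sgn R 0 = 1 := by simp [sgn]

lemma sgn_two_mul (n : ℕ) : sgn R (2*n) = sgn R n := by
  rcases Nat.eq_zero_or_pos n with rfl | hn
  · rfl
  · unfold sgn
    rw [Nat.digits_def' (by norm_num : 1 < 2) (by omega)]
    simp [Nat.mul_div_cancel_left _ (by norm_num : 0 < 2), Nat.mul_mod_right]

lemma sgn_two_mul_add_one (n : ℕ) : sgn R (2*n+1) = - sgn R n := by
  unfold sgn
  rw [Nat.digits_def' (by norm_num : 1 < 2) (by omega)]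
  have h1 : (2*n+1) % 2 = 1 := by omega
  have h2 : (2*n+1) / 2 = n := by omega
  rw [h1, h2]
  simp [pow_add, pow_succ]

lemma sgn_mul_self (n : ℕ) : sgn R n * sgn R n = 1 := by
  unfold sgn
  rw [← pow_add]
  exact Even.neg_one_pow ⟨_, rfl⟩

lemma sgn_poly (k : ℕ) : sgn (Polynomial R) k = Polynomial.C (sgn R k) := by
  unfold sgn
  rw [map_pow, map_neg, map_one]

end Sgn

/-! ### Auxiliary: coefficients of hadP, barP, Sier -/

section Coeffs
open Polynomial Finset
variable {R : Type*} [CommRing R]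

lemma hadP_coeff (p q : Polynomial R) (i : ℕ) : (hadP p q).coeff i = p.coeff i * q.coeff i := by
  unfold hadP
  rw [Polynomial.finset_sum_coeff]
  simp only [Polynomial.coeff_C_mul, Polynomial.coeff_X_pow]
  by_cases hi : i ∈ p.support
  · rw [Finset.sum_eq_single_of_mem i hi]
    · simp
    · intro b _ hb
      simp [Ne.symm hb]
  · rw [Finset.sum_eq_zero, Polynomial.notMem_support_iff.1 hi, zero_mul]
    intro b hb
    have hne : i ≠ b := fun h => hi (h ▸ hb)
    simp [hne]

lemma barP_coeff (p : Polynomial R) (i : ℕ) : (barP p).coeff i = sgn R i * p.coeff i := by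
  unfold barP
  rw [Polynomial.finset_sum_coeff]
  simp only [Polynomial.coeff_C_mul, Polynomial.coeff_X_pow]
  by_cases hi : i ∈ p.support
  · rw [Finset.sum_eq_single_of_mem i hi]
    · simp
    · intro b _ hb
      simp [Ne.symm hb]
  · rw [Finset.sum_eq_zero, Polynomial.notMem_support_iff.1 hi, mul_zero]
    intro b hb
    have hne : i ≠ b := fun h => hi (h ▸ hb)
    simp [hne]

lemma aux_two_pow_and_lt {J i : ℕ} (hi : i < 2^J) : 2^J &&& i = 0 := by
  apply Nat.eq_of_testBit_eq
  intro j
  rw [Nat.testBit_and, Nat.zero_testBit]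
  rcases eq_or_ne j J with rfl | hne
  · simp [Nat.testBit_lt_two_pow hi]
  · simp [Nat.testBit_two_pow_of_ne (Ne.symm hne)]

lemma sier_aux (m : ℕ) : ∀ J : ℕ,
    (∏ j ∈ Finset.range J, if m.testBit j then 1 + (X:R[X]) ^ (2 ^ j) else 1)
      = ∑ i ∈ Finset.range (2^J), if i &&& m = i then (X:R[X])^i else 0 := by
  intro J
  induction J with
  | zero => simp
  | succ J ih =>
    rw [Finset.prod_range_succ, ih, pow_succ, Nat.mul_two, Finset.sum_range_add]
    cases hbit : m.testBit J
    · rw [if_neg (by simp [hbit])]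
      have hz : ∀ i ∈ Finset.range (2^J),
          (if (2^J + i) &&& m = 2^J + i then (X:R[X])^(2^J+i) else 0) = 0 := by
        intro i hi
        rw [Finset.mem_range] at hi
        rw [if_neg]
        intro hsub
        have hlor : 2^J + i = 2^J ||| i := aux_add_of_and_eq_zero _ _ (aux_two_pow_and_lt hi)
        have h1 : (2^J + i).testBit J = true := by
          rw [hlor, Nat.testBit_or, Nat.testBit_two_pow_self]
          rfl
        have h2 := congrArg (fun x => x.testBit J) hsub
        simp only [Nat.testBit_and, h1, Bool.true_and, hbit] at h2
        exact Bool.false_ne_true h2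
      rw [Finset.sum_eq_zero hz, add_zero, mul_one]
    · rw [if_pos rfl, mul_add, mul_one]
      congr 1
      rw [Finset.sum_mul]
      apply Finset.sum_congr rfl
      intro i hi
      rw [Finset.mem_range] at hi
      have hlor : 2^J + i = 2^J ||| i := aux_add_of_and_eq_zero _ _ (aux_two_pow_and_lt hi)
      have h2pm : 2^J &&& m = 2^J := by
        rw [aux_sub_iff]
        intro j hj
        rcases eq_or_ne j J with rfl | hne
        · exact hbit
        · rw [Nat.testBit_two_pow_of_ne (Ne.symm hne)] at hj
          exact absurd hj (by simp)
      have hiff : ((2^J + i) &&& m = 2^J + i) ↔ (i &&& m = i) := by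
        rw [hlor, Nat.and_or_distrib_right, h2pm]
        have hle : i &&& m ≤ i := Nat.and_le_left
        rw [← aux_add_of_and_eq_zero _ _ (aux_two_pow_and_lt (lt_of_le_of_lt hle hi)),
          ← aux_add_of_and_eq_zero _ _ (aux_two_pow_and_lt hi)]
        omega
      rw [ite_mul, zero_mul, ← pow_add, add_comm i (2^J)]
      simp only [hiff]

lemma sier_eq_sum (m : ℕ) :
    Sier R m = ∑ i ∈ Finset.range (m+1), if i &&& m = i then (X:R[X])^i else 0 := by
  unfold Sier
  rw [sier_aux m (m+1)]
  symm
  apply Finset.sum_subset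
  · exact Finset.range_subset_range.2 (le_of_lt (Nat.lt_two_pow_self (n := m+1)))
  · intro x _ hnx
    rw [if_neg]
    intro hs
    exact hnx (Finset.mem_range.2 (by have := aux_sub_le hs; omega))

lemma sier_coeff (m i : ℕ) : (Sier R m).coeff i = if i &&& m = i then 1 else 0 := by
  rw [sier_eq_sum, Polynomial.finset_sum_coeff]
  simp only [apply_ite (fun p => Polynomial.coeff p i), Polynomial.coeff_zero,
    Polynomial.coeff_X_pow]
  by_cases him : i ≤ m
  · rw [Finset.sum_eq_single_of_mem i (Finset.mem_range.2 (by omega))]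
    · simp
    · intro b _ hb
      simp [Ne.symm hb]
  · rw [Finset.sum_eq_zero, if_neg]
    · intro hs; exact him (aux_sub_le hs)
    · intro b hb
      rw [Finset.mem_range] at hb
      have hne : i ≠ b := by omega
      simp [hne]

lemma sier_mul_X_pow_coeff (M k i : ℕ) :
    ((Sier R M * X^k).coeff i) = if (k ≤ i ∧ (i-k) &&& M = i-k) then 1 else 0 := by
  rw [Polynomial.coeff_mul_X_pow', sier_coeff]
  by_cases h : k ≤ i
  · by_cases h2 : (i-k) &&& M = i-k <;> simp [h, h2]
  · simp [h]

end Coeffs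

/-! ### Auxiliary: the key combinatorial identity -/

section Key
open Finset

lemma sum_range_two_mul {M : Type*} [AddCommMonoid M] (N : ℕ) (f : ℕ → M) :
    ∑ i ∈ Finset.range (2*N), f i = ∑ i ∈ Finset.range N, (f (2*i+0) + f (2*i+1)) := by
  induction N with
  | zero => simp
  | succ N ih =>
    rw [show 2*(N+1) = 2*N+1+1 by ring, Finset.sum_range_succ, Finset.sum_range_succ, ih,
      Finset.sum_range_succ]
    norm_num [add_assoc]

variable {S : Type*} [CommRing S]

lemma keystep (y : S) (k' r' a' b' κ ρ α β : ℕ) (hκ : κ < 2) (hρ : ρ < 2)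
    (hα : α < 2) (hβ : β < 2) :
    (if ((2*k'+κ)|||(2*a'+α) = (2*k'+κ)|||(2*b'+β) ∧ (2*r'+ρ) &&& (2*k'+κ) = 0)
      then sgn S (2*k'+κ) * y^(((2*k'+κ)|||(2*a'+α)) + (2*r'+ρ)) else 0)
    = (if (κ|||α = κ|||β ∧ ρ&&&κ = 0) then ((if κ = 1 then (-1:S) else 1) * y^((κ|||α)+ρ)) else 0)
      * (if (k'|||a' = k'|||b' ∧ r'&&&k' = 0) then sgn S k' * (y^2)^((k'|||a')+r') else 0) := by
  rw [aux_lor_bit _ _ _ _ hκ hα, aux_lor_bit _ _ _ _ hκ hβ, aux_land_bit _ _ _ _ hρ hκ]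
  have hκα : κ|||α < 2 := by interval_cases κ <;> interval_cases α <;> decide
  have hκβ : κ|||β < 2 := by interval_cases κ <;> interval_cases β <;> decide
  have hρκ : ρ&&&κ < 2 := by interval_cases ρ <;> interval_cases κ <;> decide
  have hsgn : sgn S (2*k'+κ) = (if κ = 1 then (-1:S) else 1) * sgn S k' := by
    interval_cases κ
    · simpa using sgn_two_mul (R := S) k'
    · simpa using sgn_two_mul_add_one (R := S) k'
  by_cases h : (k'|||a' = k'|||b' ∧ κ|||α = κ|||β ∧ r'&&&k' = 0 ∧ ρ&&&κ = 0)
  · obtain ⟨h1, h2, h3, h4⟩ := h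
    rw [if_pos (show (2*(k'|||a')+(κ|||α) = 2*(k'|||b')+(κ|||β) ∧ 2*(r'&&&k')+(ρ&&&κ) = 0)
          from ⟨by omega, by omega⟩),
      if_pos (show (κ|||α = κ|||β ∧ ρ&&&κ = 0) from ⟨h2, h4⟩),
      if_pos (show (k'|||a' = k'|||b' ∧ r'&&&k' = 0) from ⟨h1, h3⟩), hsgn,
      show (2*(k'|||a')+(κ|||α)) + (2*r'+ρ) = 2*((k'|||a')+r') + ((κ|||α)+ρ) by ring,
      pow_add, pow_mul]
    ring
  · have hneg : ¬(2*(k'|||a')+(κ|||α) = 2*(k'|||b')+(κ|||β) ∧ 2*(r'&&&k')+(ρ&&&κ) = 0) := by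
      intro ⟨e1, e2⟩
      exact h ⟨by omega, by omega, by omega, by omega⟩
    rw [if_neg hneg]
    by_cases hA : (κ|||α = κ|||β ∧ ρ&&&κ = 0)
    · rw [if_pos hA,
        if_neg (show ¬(k'|||a' = k'|||b' ∧ r'&&&k' = 0) from
          fun hB => h ⟨hB.1, hA.1, hB.2, hA.2⟩), mul_zero]
    · rw [if_neg hA, zero_mul]

lemma key : ∀ (t : ℕ) (y : S) (a b : ℕ), a < 2^t → b < 2^t →
    (∑ k ∈ Finset.range (2^t), ∑ r ∈ Finset.range (2^t),
       if (k|||a = k|||b ∧ r &&& k = 0) then sgn S k * y^((k|||a)+r) else 0)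
    = sgn S a * sgn S b * y^(a+b) := by
  intro t
  induction t with
  | zero =>
    intro y a b ha hb
    interval_cases a
    interval_cases b
    norm_num [sgn_zero]
  | succ t ih =>
    intro y a b ha hb
    have h2t : 0 < 2^t := Nat.pow_pos (by norm_num)
    obtain ⟨a', α, hα, rfl⟩ : ∃ a' α, α < 2 ∧ a = 2*a'+α := ⟨a/2, a%2, by omega, by omega⟩
    obtain ⟨b', β, hβ, rfl⟩ : ∃ b' β, β < 2 ∧ b = 2*b'+β := ⟨b/2, b%2, by omega, by omega⟩
    have ha' : a' < 2^t := by rw [pow_succ] at ha; omega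
    have hb' : b' < 2^t := by rw [pow_succ] at hb; omega
    rw [show (2:ℕ)^(t+1) = 2*2^t by ring]
    rw [sum_range_two_mul]
    have hpt : ∀ k' ∈ Finset.range (2^t),
        ((∑ r ∈ Finset.range (2*2^t),
            if ((2*k'+0)|||(2*a'+α) = (2*k'+0)|||(2*b'+β) ∧ r &&& (2*k'+0) = 0)
              then sgn S (2*k'+0) * y^(((2*k'+0)|||(2*a'+α)) + r) else 0)
          + (∑ r ∈ Finset.range (2*2^t),
            if ((2*k'+1)|||(2*a'+α) = (2*k'+1)|||(2*b'+β) ∧ r &&& (2*k'+1) = 0)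
              then sgn S (2*k'+1) * y^(((2*k'+1)|||(2*a'+α)) + r) else 0))
        = ∑ r' ∈ Finset.range (2^t),
            (((if (0|||α = 0|||β ∧ 0&&&0 = 0) then ((if (0:ℕ) = 1 then (-1:S) else 1) * y^((0|||α)+0)) else 0)
              + (if (0|||α = 0|||β ∧ 1&&&0 = 0) then ((if (0:ℕ) = 1 then (-1:S) else 1) * y^((0|||α)+1)) else 0)
              + (if (1|||α = 1|||β ∧ 0&&&1 = 0) then ((if (1:ℕ) = 1 then (-1:S) else 1) * y^((1|||α)+0)) else 0)
              + (if (1|||α = 1|||β ∧ 1&&&1 = 0) then ((if (1:ℕ) = 1 then (-1:S) else 1) * y^((1|||α)+1)) else 0))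
            * (if (k'|||a' = k'|||b' ∧ r'&&&k' = 0) then sgn S k' * (y^2)^((k'|||a')+r') else 0)) := by
      intro k' _
      rw [sum_range_two_mul, sum_range_two_mul, ← Finset.sum_add_distrib]
      apply Finset.sum_congr rfl
      intro r' _
      rw [keystep y k' r' a' b' 0 0 α β (by norm_num) (by norm_num) hα hβ,
        keystep y k' r' a' b' 0 1 α β (by norm_num) (by norm_num) hα hβ,
        keystep y k' r' a' b' 1 0 α β (by norm_num) (by norm_num) hα hβ,
        keystep y k' r' a' b' 1 1 α β (by norm_num) (by norm_num) hα hβ]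
      ring
    rw [Finset.sum_congr rfl hpt]
    simp only [← Finset.mul_sum]
    rw [ih (y^2) a' b' ha' hb']
    interval_cases α <;> interval_cases β
    · norm_num
      rw [sgn_two_mul, sgn_two_mul, show 2*a'+2*b' = 2*(a'+b') by ring, ← pow_mul]
    · norm_num
      rw [sgn_two_mul, sgn_two_mul_add_one, show 2*a'+(2*b'+1) = 2*(a'+b')+1 by ring,
        pow_add y (2*(a'+b')) 1, pow_one, ← pow_mul]
      ring
    · norm_num
      rw [sgn_two_mul_add_one, sgn_two_mul, show 2*a'+1+2*b' = 2*(a'+b')+1 by ring,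
        pow_add y (2*(a'+b')) 1, pow_one, ← pow_mul]
      ring
    · norm_num
      rw [sgn_two_mul_add_one, sgn_two_mul_add_one,
        show 2*a'+1+(2*b'+1) = 2*(a'+b')+2 by ring,
        pow_add y (2*(a'+b')) 2, ← pow_mul]
      ring

end Key

/-! ### Auxiliary: linearity of hadP and barP, monomial computations -/

section Poly
open Polynomial Finset
variable {R : Type*} [CommRing R]

lemma barP_smul (c : R) (p : Polynomial R) : barP (c • p) = c • barP p := by
  apply Polynomial.ext
  intro i
  rw [barP_coeff, Polynomial.coeff_smul, Polynomial.coeff_smul, barP_coeff, smul_eq_mul,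
    smul_eq_mul]
  ring

lemma barP_sum {ι : Type*} (s : Finset ι) (F : ι → Polynomial R) :
    barP (∑ i ∈ s, F i) = ∑ i ∈ s, barP (F i) := by
  apply Polynomial.ext
  intro n
  rw [barP_coeff, Polynomial.finset_sum_coeff, Polynomial.finset_sum_coeff, Finset.mul_sum]
  exact Finset.sum_congr rfl fun i _ => (barP_coeff _ _).symm

lemma hadP_smul_left (c : R) (p q : Polynomial R) : hadP (c • p) q = c • hadP p q := by
  apply Polynomial.ext
  intro i
  rw [hadP_coeff, Polynomial.coeff_smul, Polynomial.coeff_smul, hadP_coeff, smul_eq_mul,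
    smul_eq_mul]
  ring

lemma hadP_smul_right (c : R) (p q : Polynomial R) : hadP p (c • q) = c • hadP p q := by
  apply Polynomial.ext
  intro i
  rw [hadP_coeff, Polynomial.coeff_smul, Polynomial.coeff_smul, hadP_coeff, smul_eq_mul,
    smul_eq_mul]
  ring

lemma hadP_sum_left {ι : Type*} (s : Finset ι) (F : ι → Polynomial R) (q : Polynomial R) :
    hadP (∑ i ∈ s, F i) q = ∑ i ∈ s, hadP (F i) q := by
  apply Polynomial.ext
  intro n
  rw [hadP_coeff, Polynomial.finset_sum_coeff, Polynomial.finset_sum_coeff, Finset.sum_mul]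
  exact Finset.sum_congr rfl fun i _ => (hadP_coeff _ _ _).symm

lemma hadP_sum_right {ι : Type*} (s : Finset ι) (F : ι → Polynomial R) (q : Polynomial R) :
    hadP q (∑ i ∈ s, F i) = ∑ i ∈ s, hadP q (F i) := by
  apply Polynomial.ext
  intro n
  rw [hadP_coeff, Polynomial.finset_sum_coeff, Polynomial.finset_sum_coeff, Finset.mul_sum]
  exact Finset.sum_congr rfl fun i _ => (hadP_coeff _ _ _).symm

lemma barP_X_pow (a : ℕ) : barP ((X : Polynomial R)^a) = sgn R a • X^a := by
  apply Polynomial.ext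
  intro i
  rw [barP_coeff, Polynomial.coeff_smul, Polynomial.coeff_X_pow, smul_eq_mul]
  by_cases h : i = a
  · subst h; simp
  · simp [h]

/-- The triple Hadamard product for monomials. -/
lemma Q_eq {t : ℕ} (k a b : ℕ) (hk : k < 2^t) (ha : a < 2^t) (hb : b < 2^t) :
    hadP (hadP (Sier R (2^t-1-k) * X^k) (Sier R k * X^a)) (Sier R k * X^b)
      = if k ||| a = k ||| b then (X : Polynomial R)^(k ||| a) else 0 := by
  apply Polynomial.ext
  intro m
  rw [hadP_coeff, hadP_coeff, sier_mul_X_pow_coeff, sier_mul_X_pow_coeff,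
    sier_mul_X_pow_coeff]
  by_cases hcond : ((k ≤ m ∧ (m-k) &&& (2^t-1-k) = m-k) ∧ (a ≤ m ∧ (m-a) &&& k = m-a) ∧
      (b ≤ m ∧ (m-b) &&& k = m-b))
  · obtain ⟨hC, hm⟩ := (aux_bigcond hk ha hb).1 hcond
    rw [if_pos hcond.1, if_pos hcond.2.1, if_pos hcond.2.2, if_pos hC,
      Polynomial.coeff_X_pow, if_pos hm]
    norm_num
  · have hR : (if k ||| a = k ||| b then (X : Polynomial R)^(k ||| a) else 0).coeff m = 0 := by
      split_ifs with hC
      · rw [Polynomial.coeff_X_pow, if_neg]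
        intro hm
        exact hcond ((aux_bigcond hk ha hb).2 ⟨hC, hm⟩)
      · simp
    rw [hR]
    by_cases h1 : (k ≤ m ∧ (m-k) &&& (2^t-1-k) = m-k)
    · by_cases h2 : (a ≤ m ∧ (m-a) &&& k = m-a)
      · have h3 : ¬(b ≤ m ∧ (m-b) &&& k = m-b) := fun h3 => hcond ⟨h1, h2, h3⟩
        rw [if_neg h3, mul_zero]
      · rw [if_neg h2, mul_zero, zero_mul]
    · rw [if_neg h1, zero_mul, zero_mul]

lemma sier_mul_X_pow_eq_sum {t : ℕ} (k E : ℕ) (hk : k < 2^t) :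
    Sier R (2^t-1-k) * (X : Polynomial R)^E
      = ∑ r ∈ Finset.range (2^t), if r &&& k = 0 then (X : Polynomial R)^(E+r) else 0 := by
  have h2t : 0 < 2^t := Nat.pow_pos (by norm_num)
  rw [sier_eq_sum, Finset.sum_mul]
  rw [Finset.sum_subset (show Finset.range (2^t-1-k+1) ⊆ Finset.range (2^t) from
      Finset.range_subset_range.2 (by omega))]
  · apply Finset.sum_congr rfl
    intro r hr
    rw [Finset.mem_range] at hr
    rw [ite_mul, zero_mul, ← pow_add, add_comm r E]
    simp only [aux_bits2 hk hr]
  · intro r _ hnr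
    rw [Finset.mem_range] at hnr
    rw [if_neg, zero_mul]
    intro hc
    have := aux_sub_le hc
    omega

lemma sgn_smul_poly (k : ℕ) (p : Polynomial R) :
    sgn R k • p = sgn (Polynomial R) k * p := by
  rw [sgn_poly, Polynomial.smul_eq_C_mul]

/-- The monomial case of the convolution formula. -/
lemma mono_case {t : ℕ} (a b : ℕ) (ha : a < 2^t) (hb : b < 2^t) :
    (X : Polynomial R)^a * X^b = ∑ k ∈ Finset.range (2^t),
      sgn R k • (Sier R (2^t-1-k) *
        hadP (hadP (Sier R (2^t-1-k) * X^k) (Sier R k * barP (X^a)))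
          (Sier R k * barP (X^b))) := by
  have hterm : ∀ k ∈ Finset.range (2^t),
      sgn R k • (Sier R (2^t-1-k) *
        hadP (hadP (Sier R (2^t-1-k) * X^k) (Sier R k * barP (X^a)))
          (Sier R k * barP (X^b)))
      = (sgn R a * sgn R b) • ∑ r ∈ Finset.range (2^t),
          (if (k ||| a = k ||| b ∧ r &&& k = 0)
            then sgn (Polynomial R) k * (X : Polynomial R)^((k ||| a)+r) else 0) := by
    intro k hk
    rw [Finset.mem_range] at hk
    rw [barP_X_pow, barP_X_pow, mul_smul_comm, mul_smul_comm, hadP_smul_right,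
      hadP_smul_right, hadP_smul_left, Q_eq k a b hk ha hb, smul_smul, mul_smul_comm,
      smul_smul]
    rw [show sgn R k * (sgn R b * sgn R a) = (sgn R a * sgn R b) * sgn R k by ring,
      ← smul_smul]
    apply congrArg
    by_cases hC : k ||| a = k ||| b
    · rw [if_pos hC, sier_mul_X_pow_eq_sum _ _ hk, Finset.smul_sum]
      apply Finset.sum_congr rfl
      intro r _
      by_cases hrc : r &&& k = 0
      · rw [if_pos hrc, if_pos ⟨hC, hrc⟩, sgn_smul_poly]
      · rw [if_neg hrc, if_neg (fun h => hrc h.2), smul_zero]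
    · rw [if_neg hC, mul_zero, smul_zero]
      symm
      apply Finset.sum_eq_zero
      intro r _
      rw [if_neg (fun h => hC h.1)]
  rw [Finset.sum_congr rfl hterm, ← Finset.smul_sum, key t X a b ha hb, ← pow_add,
    sgn_poly, sgn_poly, Polynomial.smul_eq_C_mul]
  rw [show Polynomial.C (sgn R a) * Polynomial.C (sgn R b) * (X : Polynomial R)^(a+b)
      = Polynomial.C (sgn R a * sgn R b) * X^(a+b) by rw [map_mul]]
  rw [← mul_assoc, ← map_mul]
  rw [show sgn R a * sgn R b * (sgn R a * sgn R b) = (sgn R a * sgn R a) * (sgn R b * sgn R b)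
      by ring, sgn_mul_self, sgn_mul_self, mul_one, map_one, one_mul]

end Poly

lemma sum_reverse3 {M : Type*} [AddCommMonoid M] (s1 s2 s3 : Finset ℕ) (F : ℕ → ℕ → ℕ → M) :
    ∑ x ∈ s1, ∑ y ∈ s2, ∑ z ∈ s3, F x y z = ∑ z ∈ s3, ∑ y ∈ s2, ∑ x ∈ s1, F x y z := by
  calc ∑ x ∈ s1, ∑ y ∈ s2, ∑ z ∈ s3, F x y z
      = ∑ x ∈ s1, ∑ z ∈ s3, ∑ y ∈ s2, F x y z :=
        Finset.sum_congr rfl fun x _ => Finset.sum_comm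
    _ = ∑ z ∈ s3, ∑ x ∈ s1, ∑ y ∈ s2, F x y z := Finset.sum_comm
    _ = ∑ z ∈ s3, ∑ y ∈ s2, ∑ x ∈ s1, F x y z :=
        Finset.sum_congr rfl fun z _ => Finset.sum_comm

/-- For n a power of 2 and polynomials f, g of degree < n,
f * g = Σ_{k=0}^{n-1} σ k * S (n-1-k) * ((S (n-1-k) * x^k) ⊙ (S k * f̄) ⊙ (S k * ḡ)),
where f̄ = σ ⊙ f and ḡ = σ ⊙ g. -/
theorem convolution_formula_bar (R : Type*) [CommRing R] (n : ℕ)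
    (hn : ∃ t : ℕ, n = 2 ^ t) (f g : Polynomial R)
    (hf : f.degree < n) (hg : g.degree < n) :
    f * g = ∑ k ∈ Finset.range n,
      sgn R k • (Sier R (n - 1 - k) *
        hadP (hadP (Sier R (n - 1 - k) * Polynomial.X ^ k) (Sier R k * barP f))
          (Sier R k * barP g)) := by
  obtain ⟨t, rfl⟩ := hn
  have h2t : 0 < 2^t := Nat.pow_pos (by norm_num)
  have hf' : f.natDegree < 2^t := by
    rcases eq_or_ne f 0 with rfl | hf0
    · simpa using h2t
    · exact (Polynomial.natDegree_lt_iff_degree_lt hf0).2 hf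
  have hg' : g.natDegree < 2^t := by
    rcases eq_or_ne g 0 with rfl | hg0
    · simpa using h2t
    · exact (Polynomial.natDegree_lt_iff_degree_lt hg0).2 hg
  have hmon : ∀ p : Polynomial R, p.natDegree < 2^t →
      p = ∑ i ∈ Finset.range (2^t), p.coeff i • (Polynomial.X : Polynomial R)^i := by
    intro p hp
    conv_lhs => rw [Polynomial.as_sum_range' p _ hp]
    exact Finset.sum_congr rfl fun i _ => by
      rw [Polynomial.smul_eq_C_mul, Polynomial.C_mul_X_pow_eq_monomial]
  calc f * g
      = ∑ a ∈ Finset.range (2^t), ∑ b ∈ Finset.range (2^t),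
          (f.coeff a * g.coeff b) • ((Polynomial.X : Polynomial R)^a * Polynomial.X^b) := by
        conv_lhs => rw [hmon f hf', hmon g hg']
        rw [Finset.sum_mul_sum]
        apply Finset.sum_congr rfl
        intro a _
        apply Finset.sum_congr rfl
        intro b _
        rw [smul_mul_assoc, mul_smul_comm, smul_smul]
    _ = ∑ a ∈ Finset.range (2^t), ∑ b ∈ Finset.range (2^t), (f.coeff a * g.coeff b) •
          (∑ k ∈ Finset.range (2^t), sgn R k • (Sier R (2^t-1-k) *
            hadP (hadP (Sier R (2^t-1-k) * Polynomial.X^k)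
                (Sier R k * barP (Polynomial.X^a)))
              (Sier R k * barP (Polynomial.X^b)))) := by
        apply Finset.sum_congr rfl
        intro a haR
        apply Finset.sum_congr rfl
        intro b hbR
        rw [Finset.mem_range] at haR hbR
        rw [mono_case a b haR hbR]
    _ = ∑ k ∈ Finset.range (2^t),
          sgn R k • (Sier R (2^t - 1 - k) *
            hadP (hadP (Sier R (2^t - 1 - k) * Polynomial.X ^ k) (Sier R k * barP f))
              (Sier R k * barP g)) := by
        symm
        conv_lhs => rw [hmon f hf', hmon g hg']
        simp only [barP_sum, barP_smul, Finset.mul_sum, mul_smul_comm, hadP_sum_right,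
          hadP_smul_right, hadP_sum_left, hadP_smul_left, Finset.smul_sum, smul_smul]
        rw [sum_reverse3]
        apply Finset.sum_congr rfl
        intro a _
        apply Finset.sum_congr rfl
        intro b _
        apply Finset.sum_congr rfl
        intro k _
        congr 1
        ring
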